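/- Let F : ℝ^n → ℝ^m be continuously differentiable, B a symmetric positive definite n×n real matrix, ℓ > 0, and α ∈ ℝ^m with α_i > 0 for all i. Define w_ℓ^α(x) = sup_{y∈ℝ^n} min_{i∈{1,…,m}} [ ⟨∇F_i(x), x−y⟩/α_i − (ℓ/2)‖x−y‖_B² ]. Then w_ℓ^α(x) ≥ 0, and x is Pareto critical for F if and only if w_ℓ^α(x) = 0. -/

import Mathlib

open scoped RealInnerProductSpace

/-- Minimum of a function over the (nonempty) finite index type `Fin m`. -/
noncomputable def fmin {m : ℕ} [NeZero m] (f : Fin m → ℝ) : ℝ :=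
  Finset.univ.inf' Finset.univ_nonempty f

/-- A point `x` is Pareto critical for `F` if there is no direction `d` with
`⟨∇F_i(x), d⟩ < 0` for all `i`. -/
def ParetoCritical {n m : ℕ} (F : Fin m → EuclideanSpace ℝ (Fin n) → ℝ)
    (x : EuclideanSpace ℝ (Fin n)) : Prop :=
  ¬∃ d : EuclideanSpace ℝ (Fin n), ∀ i, ⟪gradient (F i) x, d⟫ < 0

lemma coercive {n : ℕ} (B : EuclideanSpace ℝ (Fin n) →ₗ[ℝ] EuclideanSpace ℝ (Fin n))
    (hposdef : ∀ u : EuclideanSpace ℝ (Fin n), u ≠ 0 → 0 < ⟪u, B u⟫) :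
    ∃ c > 0, ∀ d : EuclideanSpace ℝ (Fin n), c * ‖d‖ ^ 2 ≤ ⟪d, B d⟫ := by
  by_cases h : ∃ d : EuclideanSpace ℝ (Fin n), ‖d‖ = 1
  · obtain ⟨d0, hd0⟩ := h
    have hcont : Continuous fun u : EuclideanSpace ℝ (Fin n) => ⟪u, B u⟫ :=
      continuous_id.inner (B.continuous_of_finiteDimensional)
    have hcpt : IsCompact (Metric.sphere (0 : EuclideanSpace ℝ (Fin n)) 1) :=
      isCompact_sphere 0 1
    have hne : (Metric.sphere (0 : EuclideanSpace ℝ (Fin n)) 1).Nonempty :=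
      ⟨d0, by simpa [mem_sphere_zero_iff_norm] using hd0⟩
    obtain ⟨u0, hu0mem, hu0min⟩ := hcpt.exists_isMinOn hne hcont.continuousOn
    have hu0norm : ‖u0‖ = 1 := mem_sphere_zero_iff_norm.mp hu0mem
    have hu0ne : u0 ≠ 0 := by intro h0; simp [h0] at hu0norm
    refine ⟨⟪u0, B u0⟫, hposdef u0 hu0ne, fun d => ?_⟩
    rcases eq_or_ne d 0 with rfl | hd
    · simp
    · have hdn : (0:ℝ) < ‖d‖ := norm_pos_iff.mpr hd
      set u : EuclideanSpace ℝ (Fin n) := ‖d‖⁻¹ • d with hu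
      have hun : ‖u‖ = 1 := by
        rw [hu, norm_smul, norm_inv, norm_norm]
        field_simp
      have hle : ⟪u0, B u0⟫ ≤ ⟪u, B u⟫ := hu0min (mem_sphere_zero_iff_norm.mpr hun)
      have hcomp : ⟪u, B u⟫ = ‖d‖⁻¹ ^ 2 * ⟪d, B d⟫ := by
        rw [hu, map_smul, real_inner_smul_left, real_inner_smul_right]; ring
      rw [hcomp] at hle
      have hkey : ⟪d, B d⟫ = ‖d‖ ^ 2 * (‖d‖⁻¹ ^ 2 * ⟪d, B d⟫) := by
        field_simp
      rw [hkey]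
      have h2 : (0:ℝ) ≤ ‖d‖ ^ 2 := by positivity
      nlinarith
  · refine ⟨1, one_pos, fun d => ?_⟩
    have : d = 0 := by
      by_contra hd
      exact h ⟨‖d‖⁻¹ • d, by
        rw [norm_smul, norm_inv, norm_norm]
        exact inv_mul_cancel₀ (norm_ne_zero_iff.mpr hd)⟩
    simp [this]


lemma fmin_le {m : ℕ} [NeZero m] (f : Fin m → ℝ) (i : Fin m) : fmin f ≤ f i :=
  Finset.inf'_le _ (Finset.mem_univ i)

lemma le_fmin {m : ℕ} [NeZero m] {f : Fin m → ℝ} {a : ℝ} (h : ∀ i, a ≤ f i) : a ≤ fmin f :=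
  Finset.le_inf' _ _ fun i _ => h i

lemma lt_fmin {m : ℕ} [NeZero m] {f : Fin m → ℝ} {a : ℝ} (h : ∀ i, a < f i) : a < fmin f :=
  (Finset.lt_inf'_iff _).mpr fun i _ => h i

lemma fmin_const {m : ℕ} [NeZero m] (a : ℝ) : fmin (fun _ : Fin m => a) = a :=
  Finset.inf'_const _ _

section key
variable {n m : ℕ} [NeZero m]

lemma key (g : Fin m → EuclideanSpace ℝ (Fin n))
    (B : EuclideanSpace ℝ (Fin n) →ₗ[ℝ] EuclideanSpace ℝ (Fin n))
    (hposdef : ∀ u : EuclideanSpace ℝ (Fin n), u ≠ 0 → 0 < ⟪u, B u⟫)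
    (ℓ : ℝ) (hℓ : 0 < ℓ) (α : Fin m → ℝ) (hα : ∀ i, 0 < α i)
    (x : EuclideanSpace ℝ (Fin n)) (w : ℝ)
    (hw : w = ⨆ y : EuclideanSpace ℝ (Fin n),
      fmin fun i => ⟪g i, x - y⟫ / α i - ℓ / 2 * ⟪x - y, B (x - y)⟫) :
    0 ≤ w ∧ ((¬∃ d : EuclideanSpace ℝ (Fin n), ∀ i, ⟪g i, d⟫ < 0) ↔ w = 0) := by
  classical
  set φ : EuclideanSpace ℝ (Fin n) → ℝ :=
    fun y => fmin fun i => ⟪g i, x - y⟫ / α i - ℓ / 2 * ⟪x - y, B (x - y)⟫ with hφ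
  obtain ⟨c, hc, hcB⟩ := coercive B hposdef
  have i0 : Fin m := ⟨0, Nat.pos_of_ne_zero (NeZero.ne m)⟩
  -- value at x is 0
  have hφx : φ x = 0 := by
    have h0 : (fun i : Fin m => ⟪g i, x - x⟫ / α i - ℓ / 2 * ⟪x - x, B (x - x)⟫)
        = fun _ : Fin m => (0:ℝ) := by
      funext i; simp
    simp only [hφ, h0, fmin_const]
  -- boundedness
  set a : ℝ := ‖g i0‖ / α i0 with ha_def
  have ha : 0 ≤ a := div_nonneg (norm_nonneg _) (hα i0).le
  set b : ℝ := ℓ / 2 * c with hb_def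
  have hb : 0 < b := by positivity
  have hbound : ∀ y, φ y ≤ a ^ 2 / (4 * b) := by
    intro y
    have h1 : φ y ≤ ⟪g i0, x - y⟫ / α i0 - ℓ / 2 * ⟪x - y, B (x - y)⟫ := fmin_le _ i0
    have h2 : ⟪g i0, x - y⟫ ≤ ‖g i0‖ * ‖x - y‖ := real_inner_le_norm _ _
    have h3 := hcB (x - y)
    have h4 : ⟪g i0, x - y⟫ / α i0 ≤ a * ‖x - y‖ := by
      rw [ha_def, div_mul_eq_mul_div]
      exact (div_le_div_iff_of_pos_right (hα i0)).mpr h2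
    have h5 : ℓ / 2 * (c * ‖x - y‖ ^ 2) ≤ ℓ / 2 * ⟪x - y, B (x - y)⟫ :=
      mul_le_mul_of_nonneg_left h3 (by positivity)
    have h6 : φ y ≤ a * ‖x - y‖ - b * ‖x - y‖ ^ 2 := by
      rw [hb_def]; linarith
    rw [le_div_iff₀ (by positivity : (0:ℝ) < 4 * b)]
    nlinarith [mul_le_mul_of_nonneg_left h6 (le_of_lt (by positivity : (0:ℝ) < 4 * b)),
      sq_nonneg (2 * b * ‖x - y‖ - a)]
  have hBdd : BddAbove (Set.range φ) := ⟨a ^ 2 / (4 * b), by rintro _ ⟨y, rfl⟩; exact hbound y⟩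
  have hwge : 0 ≤ w := by
    rw [hw]; exact hφx ▸ le_ciSup hBdd x
  refine ⟨hwge, ?_, ?_⟩
  · -- Pareto critical → w = 0
    intro hP
    have hle : w ≤ 0 := by
      rw [hw]
      refine Real.iSup_le (fun y => ?_) le_rfl
      by_contra hpos
      push_neg at hpos
      have hterm : ∀ i, 0 < ⟪g i, x - y⟫ / α i - ℓ / 2 * ⟪x - y, B (x - y)⟫ :=
        fun i => lt_of_lt_of_le hpos (fmin_le _ i)
      have hdne : x - y ≠ 0 := by
        intro h0
        have := hterm i0
        rw [h0] at this
        simp at this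
      have hq : 0 < ⟪x - y, B (x - y)⟫ := hposdef _ hdne
      refine hP ⟨-(x - y), fun i => ?_⟩
      have hi := hterm i
      have hgi : 0 < ⟪g i, x - y⟫ := by
        have : 0 < ⟪g i, x - y⟫ / α i := by nlinarith
        exact (div_pos_iff.mp this).resolve_right (fun h => absurd h.2 (not_lt.mpr (hα i).le)) |>.1
      rw [inner_neg_right]
      linarith
    linarith
  · -- w = 0 → Pareto critical
    intro hw0
    rintro ⟨d, hdlt⟩
    have hdne : d ≠ 0 := by
      intro h0; have := hdlt i0; rw [h0, inner_zero_right] at this; exact lt_irrefl 0 this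
    set K : ℝ := ℓ / 2 * ⟪d, B d⟫ with hK_def
    have hK : 0 < K := by
      have := hposdef d hdne; positivity
    set cm : ℝ := fmin (fun i => -⟪g i, d⟫ / α i) with hcm_def
    have hcm : 0 < cm := lt_fmin fun i => by
      have h1 := hdlt i
      exact div_pos (by linarith) (hα i)
    set t : ℝ := cm / (2 * K) with ht_def
    have ht : 0 < t := by positivity
    have htK : t * K = cm / 2 := by
      rw [ht_def]; field_simp
    set y : EuclideanSpace ℝ (Fin n) := x + t • d with hy_def
    have hxy : x - y = -(t • d) := by rw [hy_def]; exact sub_add_cancel_left x (t • d)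
    have hφy : t * cm / 2 ≤ φ y := by
      refine le_fmin fun i => ?_
      have hterm : ⟪g i, x - y⟫ / α i - ℓ / 2 * ⟪x - y, B (x - y)⟫
          = -(t * ⟪g i, d⟫) / α i - ℓ / 2 * (t * (t * ⟪d, B d⟫)) := by
        rw [hxy, inner_neg_right, real_inner_smul_right, map_neg, map_smul,
          inner_neg_neg, real_inner_smul_left, real_inner_smul_right]
      rw [hterm]
      have hci : cm ≤ -⟪g i, d⟫ / α i := fmin_le _ i
      have h1 : t * cm ≤ t * (-⟪g i, d⟫ / α i) := mul_le_mul_of_nonneg_left hci ht.le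
      have h2 : ℓ / 2 * (t * (t * ⟪d, B d⟫)) = t * (cm / 2) := by
        rw [← htK, hK_def]; ring
      have h3 : -(t * ⟪g i, d⟫) / α i = t * (-⟪g i, d⟫ / α i) := by ring
      rw [h3, h2]
      linarith
    have : φ y ≤ w := hw ▸ le_ciSup hBdd y
    have : 0 < w := lt_of_lt_of_le (by positivity) (le_trans hφy this)
    rw [hw0] at this
    exact lt_irrefl 0 this
end key


/-- The merit function
`w_ℓ^α(x) = sup_y min_i [⟨∇F_i(x), x−y⟩/α_i − (ℓ/2)‖x−y‖_B²]` is nonnegative, and it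
vanishes at `x` if and only if `x` is Pareto critical. -/
theorem stmt14 {n m : ℕ} [NeZero m] (F : Fin m → EuclideanSpace ℝ (Fin n) → ℝ)
    (hF : ∀ i, ContDiff ℝ 1 (F i))
    (B : EuclideanSpace ℝ (Fin n) →ₗ[ℝ] EuclideanSpace ℝ (Fin n))
    (hsym : ∀ u v : EuclideanSpace ℝ (Fin n), ⟪B u, v⟫ = ⟪u, B v⟫)
    (hposdef : ∀ u : EuclideanSpace ℝ (Fin n), u ≠ 0 → 0 < ⟪u, B u⟫)
    (ℓ : ℝ) (hℓ : 0 < ℓ) (α : Fin m → ℝ) (hα : ∀ i, 0 < α i)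
    (x : EuclideanSpace ℝ (Fin n)) (w : ℝ)
    (hw : w = ⨆ y : EuclideanSpace ℝ (Fin n),
      fmin fun i => ⟪gradient (F i) x, x - y⟫ / α i - ℓ / 2 * ⟪x - y, B (x - y)⟫) :
    0 ≤ w ∧ (ParetoCritical F x ↔ w = 0) :=
  key (fun i => gradient (F i) x) B hposdef ℓ hℓ α hα x w hw
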